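/- arXiv:1605.03349 — 3 statements merged into one kernel-verified Lean document; each statement's English description precedes it below -/
import Mathlib

section
/- Let k be an even positive integer, let π ∈ B_{k/2} be a non-crossing pair-partition of {1,...,k}, and let (g_1,...,g_k) be a π-adopted sequence in a countable set G. If {m, m+l} ∈ π for some l > 1, then g_m = g_{m+l+1} and g_{m+1} = g_{m+l} (indices cyclic, k+1 := 1). -/
open MeasureTheory Filter Asymptotics ProbabilityTheory
open scoped Classical

/-- Cyclic addition on `Fin k` (indices of `{1,…,k}` understood cyclically). -/
def cycAdd {k : ℕ} (m : Fin k) (a : ℕ) : Fin k :=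
  ⟨(m.val + a) % k, Nat.mod_lt _ m.pos⟩

/-- Cyclic successor on `Fin k` (`k + 1 := 1`). -/
def cycSucc {k : ℕ} (m : Fin k) : Fin k := cycAdd m 1

/-- A pair-partition of `{1,…,k}`, encoded as a fixed-point free involution:
the blocks are the sets `{i, pair i}`. -/
structure PairPartition (k : ℕ) where
  pair : Fin k → Fin k
  involutive : ∀ i, pair (pair i) = i
  pair_ne : ∀ i, pair i ≠ i

namespace PairPartition

/-- A pair-partition is crossing if there are `a < b < c < d` such that
`{a,c}` and `{b,d}` are blocks. -/
def Crossing {k : ℕ} (π : PairPartition k) : Prop :=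
  ∃ a b c d : Fin k, a < b ∧ b < c ∧ c < d ∧ π.pair a = c ∧ π.pair b = d

/-- Non-crossing pair-partitions. -/
def NonCrossing {k : ℕ} (π : PairPartition k) : Prop := ¬ π.Crossing

noncomputable instance {k : ℕ} : Fintype (PairPartition k) :=
  Fintype.ofInjective PairPartition.pair (fun a b h => by
    cases a; cases b; simpa using h)

end PairPartition

/-- The increasing embedding `Fin (k-2) → Fin k` which misses the two positions
`m`, `m+1` (0-based). -/
def skip2 {k : ℕ} (m : ℕ) (j : Fin (k - 2)) : Fin k :=
  if j.val < m then ⟨j.val, by have := j.isLt; omega⟩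
  else ⟨j.val + 2, by have := j.isLt; omega⟩

/-- The embedding `Fin (k-2) → Fin k` which misses the two cyclic positions
`m+1`, `m+2` (0-based). -/
def seqSkip {k : ℕ} (m : ℕ) (j : Fin (k - 2)) : Fin k :=
  if m + 2 < k then
    (if j.val ≤ m then ⟨j.val, by have := j.isLt; omega⟩
     else ⟨j.val + 2, by have := j.isLt; omega⟩)
  else ⟨j.val + 1, by have := j.isLt; omega⟩

/-- `π ∖• {m, m+1}` (0-based: the block `{m, m+1}` is removed and indices `> m+1`
are relabelled by `a ↦ a - 2`), on the level of pairing functions. -/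
def delPairFun {k : ℕ} (p : Fin k → Fin k) (m : ℕ) : Fin (k - 2) → Fin (k - 2) :=
  fun j =>
    ⟨(if (p (skip2 m j)).val < m then (p (skip2 m j)).val
      else (p (skip2 m j)).val - 2) % (k - 2), Nat.mod_lt _ j.pos⟩

/-- `π`-adopted sequences (with `π` a pair-partition of `{1,…,k}` given by its pairing
function `p`), defined recursively:  for `k = 2` exactly the sequences `(g, h)` with
`g ≠ h` are adopted; for `k > 2` it is required that for every (0-based) block
`{m, m+1}` of `π` one has `g m = g (m+2)` (cyclically), `g s ≠ g (m+1)` for all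
`s ≠ m+1`, and that the sequence obtained by deleting the entries at the (cyclic)
positions `m+1`, `m+2` is `π ∖• {m, m+1}`-adopted. -/
inductive IsAdoptedFun {G : Type*} : {k : ℕ} → (Fin k → Fin k) → (Fin k → G) → Prop where
  | base (p : Fin 2 → Fin 2) (g : Fin 2 → G) (h : g 0 ≠ g 1) : IsAdoptedFun p g
  | step {k : ℕ} (hk : 4 ≤ k) (p : Fin k → Fin k) (g : Fin k → G)
      (h1 : ∀ (m : ℕ) (hm : m + 1 < k), (p ⟨m, by omega⟩).val = m + 1 →
        g ⟨m, by omega⟩ = g ⟨(m + 2) % k, Nat.mod_lt _ (by omega)⟩)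
      (h2 : ∀ (m : ℕ) (hm : m + 1 < k), (p ⟨m, by omega⟩).val = m + 1 →
        ∀ s : Fin k, s ≠ ⟨m + 1, hm⟩ → g s ≠ g ⟨m + 1, hm⟩)
      (h3 : ∀ (m : ℕ) (hm : m + 1 < k), (p ⟨m, by omega⟩).val = m + 1 →
        IsAdoptedFun (delPairFun p m) (fun j => g (seqSkip m j))) :
      IsAdoptedFun p g

/-- `π`-adopted sequences for a pair-partition `π`. -/
def PairPartition.IsAdopted {G : Type*} {k : ℕ} (π : PairPartition k) (g : Fin k → G) : Prop :=
  IsAdoptedFun π.pair g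

/-- The integral `∫_{[0,1]^n} ∏_{edges {a,b} of the graph traversed by `Gs`}
`α(|x_a - x_b|)²`, where the edges are `{Gs m, Gs (m+1)}` (cyclically). -/
noncomputable def JwithSeq (α : ℝ → ℝ) {k n : ℕ} (Gs : Fin k → Fin n) : ℝ :=
  ∫ x in (Set.univ.pi fun _ : Fin n => Set.Icc (0:ℝ) 1),
    ∏ e ∈ Finset.image (fun m : Fin k => s(Gs m, Gs (cycSucc m))) Finset.univ,
      Sym2.lift ⟨fun a b => α |x a - x b| ^ 2, fun a b => by simp only [abs_sub_comm (x a) (x b)]⟩ e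

/-- The `α²`-integral `J_α(π)` over the `π`-adopted graph (rooted tree) of a
non-crossing pair-partition `π` of `{1,…,k}` (given by its pairing function):
the adopted sequence has exactly `k/2 + 1` distinct nodes, so we realize it as a
surjection onto `Fin (k/2+1)`; the integral does not depend on this choice. -/
noncomputable def Jfun (α : ℝ → ℝ) {k : ℕ} (p : Fin k → Fin k) : ℝ :=
  if h : ∃ Gs : Fin k → Fin (k / 2 + 1), Function.Surjective Gs ∧ IsAdoptedFun p Gs then
    JwithSeq α h.choose
  else 0

/-- `P_N^{-1}(π)` for a pair-partition `π` (given by its pairing function `p`): the set of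
tuples `(i_1, …, i_k) ∈ {1,…,N}^k` such that `(i_l, i_{l+1}) ∼ (i_m, i_{m+1})` holds iff
`l` and `m` lie in the same block of `π` (indices cyclic). -/
def PinvPair {k N : ℕ} (E : Fin N × Fin N → Fin N × Fin N → Prop) (p : Fin k → Fin k) :
    Set (Fin k → Fin N) :=
  {i | ∀ l m : Fin k, E (i l, i (cycSucc l)) (i m, i (cycSucc m)) ↔ (l = m ∨ p l = m)}

/-- `P_N^{-1}(π)` for a general partition `π` of `{1,…,k}`. -/
def PinvPartition {k N : ℕ} (E : Fin N × Fin N → Fin N × Fin N → Prop)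
    (π : Finpartition (Finset.univ : Finset (Fin k))) : Set (Fin k → Fin N) :=
  {i | ∀ l m : Fin k, E (i l, i (cycSucc l)) (i m, i (cycSucc m)) ↔ ∃ b ∈ π.parts, l ∈ b ∧ m ∈ b}

/-- `Π_N^{-1}(π)`: the members of `P_N^{-1}(π)` which are not `π`-adopted sequences. -/
def PinvNA {k N : ℕ} (E : Fin N × Fin N → Fin N × Fin N → Prop) (p : Fin k → Fin k) :
    Set (Fin k → Fin N) :=
  {i | i ∈ PinvPair E p ∧ ¬ IsAdoptedFun p i}

/-- The quantity from condition (C1): `max_p #{(q,r,s) : (p,q) ∼ (r,s)}`. -/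
noncomputable def cond1Count {N : ℕ} (E : Fin N × Fin N → Fin N × Fin N → Prop) : ℕ :=
  Finset.univ.sup fun p : Fin N =>
    ({qrs : Fin N × Fin N × Fin N | E (p, qrs.1) (qrs.2.1, qrs.2.2)}).ncard

/-- The quantity from condition (C3): `#{(p,q,r) : (p,q) ∼ (q,r), r ≠ p}`. -/
noncomputable def cond3Count {N : ℕ} (E : Fin N × Fin N → Fin N × Fin N → Prop) : ℕ :=
  ({pqr : Fin N × Fin N × Fin N | E (pqr.1, pqr.2.1) (pqr.2.1, pqr.2.2) ∧ pqr.2.2 ≠ pqr.1}).ncard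

/-- Condition (C2): `#{s : (p,q) ∼ (r,s)} ≤ B` for all `p, q, r`. -/
def cond2 {N : ℕ} (E : Fin N × Fin N → Fin N × Fin N → Prop) (B : ℕ) : Prop :=
  ∀ p q r : Fin N, ({s : Fin N | E (p, q) (r, s)}).ncard ≤ B

/-- Independence of the sub-families of `(X_{pq})` indexed by the equivalence classes
of `∼`. -/
def IndepClasses {Ω : Type*} [MeasureSpace Ω] {N : ℕ}
    (E : Fin N × Fin N → Fin N × Fin N → Prop) (hE : Equivalence E)
    (X : Fin N → Fin N → Ω → ℝ) : Prop :=
  iIndepFun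
    (fun c : Quotient (Setoid.mk E hE) =>
      fun ω => fun p : {p : Fin N × Fin N // Quotient.mk (Setoid.mk E hE) p = c} =>
        X p.1.1 p.1.2 ω) volume

/-- The Catalan number `C_k = binom(2k, k)/(k+1)` as a real number. -/
noncomputable def catalanReal (j : ℕ) : ℝ := (Nat.choose (2 * j) j : ℝ) / (j + 1)

/-- The integral defining `J_α` over the graph traversed by `Gs`, in which the variable
attached to the node `g0` is fixed equal to `t` and only the remaining variables are
integrated over `[0,1]`. -/
noncomputable def JpartSeq (α : ℝ → ℝ) {k n : ℕ} (Gs : Fin k → Fin n) (g0 : Fin n) (t : ℝ) : ℝ :=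
  ∫ y in (Set.univ.pi fun _ : {i : Fin n // i ≠ g0} => Set.Icc (0:ℝ) 1),
    ∏ e ∈ Finset.image (fun m : Fin k => s(Gs m, Gs (cycSucc m))) Finset.univ,
      Sym2.lift ⟨fun a b =>
          α |(fun i : Fin n => if h : i = g0 then t else y ⟨i, h⟩) a -
             (fun i : Fin n => if h : i = g0 then t else y ⟨i, h⟩) b| ^ 2,
        fun a b => by
          simp only [abs_sub_comm ((fun i : Fin n => if h : i = g0 then t else y ⟨i, h⟩) a)
            ((fun i : Fin n => if h : i = g0 then t else y ⟨i, h⟩) b)]⟩ e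

lemma fin_gcongr {G : Type*} {k : ℕ} (g : Fin k → G) {i j : Fin k} (h : i.val = j.val) :
    g i = g j := congrArg g (Fin.ext h)

lemma skip2_val {k m : ℕ} (j : Fin (k - 2)) :
    (skip2 m j : Fin k).val = if j.val < m then j.val else j.val + 2 := by
  by_cases h : j.val < m <;> simp [skip2, h]

lemma seqSkip_val {k m : ℕ} (hm : m + 2 < k) (j : Fin (k - 2)) :
    (seqSkip m j : Fin k).val = if j.val ≤ m then j.val else j.val + 2 := by
  by_cases h : j.val ≤ m <;> simp [seqSkip, hm, h]

lemma skip2_inj {k m : ℕ} {a b : Fin (k - 2)} (h : skip2 (k := k) m a = skip2 m b) : a = b := by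
  have := congrArg Fin.val h
  rw [skip2_val, skip2_val] at this
  apply Fin.ext
  split_ifs at this <;> omega

lemma skip2_lt {k m : ℕ} {a b : Fin (k - 2)} (h : a < b) :
    skip2 (k := k) m a < skip2 m b := by
  rw [Fin.lt_def, skip2_val, skip2_val]
  rw [Fin.lt_def] at h
  split_ifs <;> omega

lemma skip2_delPairFun {k m' : ℕ} (hm' : m' + 1 < k) (p : Fin k → Fin k)
    (hInv : ∀ i, p (p i) = i)
    (hb : (p ⟨m', by omega⟩).val = m' + 1) (j : Fin (k - 2)) :
    skip2 m' (delPairFun p m' j) = p (skip2 m' j) := by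
  have hpinj : ∀ a b : Fin k, p a = p b → a = b := by
    intro a b h
    have h2 := hInv a
    rw [h, hInv b] at h2
    exact h2.symm
  have hs1 : (skip2 (k := k) m' j).val ≠ m' := by rw [skip2_val]; split <;> omega
  have hs2 : (skip2 (k := k) m' j).val ≠ m' + 1 := by rw [skip2_val]; split <;> omega
  have hpm : p ⟨m', by omega⟩ = ⟨m' + 1, hm'⟩ := Fin.ext hb
  have hpm1 : p ⟨m' + 1, hm'⟩ = ⟨m', by omega⟩ :=
    (congrArg p hpm).symm.trans (hInv ⟨m', by omega⟩)
  have hp1 : (p (skip2 m' j)).val ≠ m' := by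
    intro h
    have h4 : p (skip2 m' j) = p ⟨m' + 1, hm'⟩ := by rw [hpm1]; exact Fin.ext h
    exact hs2 (congrArg Fin.val (hpinj _ _ h4))
  have hp2 : (p (skip2 m' j)).val ≠ m' + 1 := by
    intro h
    have h4 : p (skip2 m' j) = p ⟨m', by omega⟩ := by rw [hpm]; exact Fin.ext h
    exact hs1 (congrArg Fin.val (hpinj _ _ h4))
  have hlt : (p (skip2 m' j)).val < k := (p _).isLt
  apply Fin.ext
  rw [skip2_val]
  have hval : (delPairFun p m' j).val =
      (if (p (skip2 m' j)).val < m' then (p (skip2 m' j)).val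
       else (p (skip2 m' j)).val - 2) % (k - 2) := rfl
  rw [hval]
  by_cases hc : (p (skip2 m' j)).val < m'
  · rw [if_pos hc, Nat.mod_eq_of_lt (by omega), if_pos hc]
  · rw [if_neg hc, Nat.mod_eq_of_lt (by omega), if_neg (by omega)]
    omega

lemma delPair_props {k m' : ℕ} (hm' : m' + 1 < k) (p : Fin k → Fin k)
    (hInv : ∀ i, p (p i) = i) (hFpf : ∀ i, p i ≠ i)
    (hNC : ¬ ∃ a b c d : Fin k, a < b ∧ b < c ∧ c < d ∧ p a = c ∧ p b = d)
    (hb : (p ⟨m', by omega⟩).val = m' + 1) :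
    (∀ i, delPairFun p m' (delPairFun p m' i) = i) ∧
    (∀ i, delPairFun p m' i ≠ i) ∧
    (¬ ∃ a b c d : Fin (k - 2), a < b ∧ b < c ∧ c < d ∧
        delPairFun p m' a = c ∧ delPairFun p m' b = d) := by
  have key := skip2_delPairFun hm' p hInv hb
  refine ⟨?_, ?_, ?_⟩
  · intro i
    apply skip2_inj (m := m')
    rw [key, key, hInv]
  · intro i h
    have := key i
    rw [h] at this
    exact hFpf _ this.symm
  · rintro ⟨a, b, c, d, h1, h2, h3, h4, h5⟩
    refine hNC ⟨skip2 m' a, skip2 m' b, skip2 m' c, skip2 m' d,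
      skip2_lt h1, skip2_lt h2, skip2_lt h3, ?_, ?_⟩
    · rw [← key, h4]
    · rw [← key, h5]

lemma existsAdjacent {k : ℕ} (p : Fin k → Fin k)
    (hInv : ∀ i, p (p i) = i) (hFpf : ∀ i, p i ≠ i)
    (hNC : ¬ ∃ a b c d : Fin k, a < b ∧ b < c ∧ c < d ∧ p a = c ∧ p b = d)
    (m l : ℕ) (hl : 2 ≤ l) (hml : m + l < k)
    (hb : (p ⟨m, by omega⟩).val = m + l) :
    ∃ m', m < m' ∧ m' + 1 < m + l ∧ ∀ (h : m' < k), (p ⟨m', h⟩).val = m' + 1 := by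
  have hpinj : ∀ a b : Fin k, p a = p b → a = b := by
    intro a b h
    have h2 := hInv a
    rw [h, hInv b] at h2
    exact h2.symm
  have hmk : m < k := by omega
  have hpm : p ⟨m, hmk⟩ = ⟨m + l, hml⟩ := Fin.ext hb
  have hpml : p ⟨m + l, hml⟩ = ⟨m, hmk⟩ := (congrArg p hpm).symm.trans (hInv _)
  have hin : ∀ a (ha : a < k), m < a → a < m + l →
      m < (p ⟨a, ha⟩).val ∧ (p ⟨a, ha⟩).val < m + l := by
    intro a ha h1 h2
    have hlt : (p ⟨a, ha⟩).val < k := (p _).isLt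
    have hne : (p ⟨a, ha⟩).val ≠ a := fun h => hFpf ⟨a, ha⟩ (Fin.ext h)
    have hnem : (p ⟨a, ha⟩).val ≠ m := by
      intro h
      have h4 : p ⟨a, ha⟩ = p ⟨m + l, hml⟩ := by rw [hpml]; exact Fin.ext h
      have h6 := hpinj _ _ h4
      simp only [Fin.mk.injEq] at h6
      omega
    have hneml : (p ⟨a, ha⟩).val ≠ m + l := by
      intro h
      have h4 : p ⟨a, ha⟩ = p ⟨m, hmk⟩ := by rw [hpm]; exact Fin.ext h
      have h6 := hpinj _ _ h4
      simp only [Fin.mk.injEq] at h6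
      omega
    constructor
    · by_contra hcon
      -- p a < m : crossing (pa, m, a, m+l)
      have hlo : (p ⟨a, ha⟩).val < m := by omega
      exact hNC ⟨p ⟨a, ha⟩, ⟨m, hmk⟩, ⟨a, ha⟩, ⟨m + l, hml⟩,
        Fin.lt_def.mpr (by show (p ⟨a, ha⟩).val < m; omega),
        Fin.lt_def.mpr (by show m < a; omega),
        Fin.lt_def.mpr (by show a < m + l; omega),
        hInv _, hpm⟩
    · by_contra hcon
      have hhi : m + l < (p ⟨a, ha⟩).val := by omega
      exact hNC ⟨⟨m, hmk⟩, ⟨a, ha⟩, ⟨m + l, hml⟩, p ⟨a, ha⟩,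
        Fin.lt_def.mpr (by show m < a; omega),
        Fin.lt_def.mpr (by show a < m + l; omega),
        Fin.lt_def.mpr (by show m + l < (p ⟨a, ha⟩).val; omega),
        hpm, rfl⟩
  have descent : ∀ d a (ha : a < k), m < a → a < m + l → a < (p ⟨a, ha⟩).val →
      (p ⟨a, ha⟩).val ≤ a + d →
      ∃ m', m < m' ∧ m' + 1 < m + l ∧ ∀ (h : m' < k), (p ⟨m', h⟩).val = m' + 1 := by
    intro d
    induction d with
    | zero => intro a ha _ _ h3 h4; omega
    | succ d ih =>
      intro a ha h1 h2 h3 h4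
      by_cases hstep : (p ⟨a, ha⟩).val = a + 1
      · exact ⟨a, h1, by have := (hin a ha h1 h2).2; omega, fun h => hstep⟩
      · have hbd := hin a ha h1 h2
        have hb1 : a + 1 < m + l := by omega
        have hab : a + 1 < k := by omega
        have hpb := hin (a + 1) hab (by omega) hb1
        have hpbne : (p ⟨a + 1, hab⟩).val ≠ a + 1 := fun h => hFpf _ (Fin.ext h)
        rcases Nat.lt_or_ge (a + 1) ((p ⟨a + 1, hab⟩).val) with hgt | hle
        · have hne2 : (p ⟨a + 1, hab⟩).val ≠ (p ⟨a, ha⟩).val := by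
            intro h
            have h6 := hpinj _ _ (Fin.ext h)
            simp only [Fin.mk.injEq] at h6
            omega
          have hlt2 : (p ⟨a + 1, hab⟩).val < (p ⟨a, ha⟩).val := by
            by_contra hcon
            exact hNC ⟨⟨a, ha⟩, ⟨a + 1, hab⟩, p ⟨a, ha⟩, p ⟨a + 1, hab⟩,
              Fin.lt_def.mpr (by show a < a + 1; omega),
              Fin.lt_def.mpr (by show a + 1 < (p ⟨a, ha⟩).val; omega),
              Fin.lt_def.mpr (by show (p ⟨a, ha⟩).val < (p ⟨a + 1, hab⟩).val; omega),
              rfl, rfl⟩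
          exact ih (a + 1) hab (by omega) hb1 hgt (by omega)
        · have hpbne2 : (p ⟨a + 1, hab⟩).val ≠ a := by
            intro h
            have h4 : p ⟨a + 1, hab⟩ = ⟨a, ha⟩ := Fin.ext h
            have h5 : p ⟨a, ha⟩ = ⟨a + 1, hab⟩ := (congrArg p h4).symm.trans (hInv _)
            exact hstep (congrArg Fin.val h5)
          exact absurd (hNC) (by
            intro hNC'
            exact hNC' ⟨p ⟨a + 1, hab⟩, ⟨a, ha⟩, ⟨a + 1, hab⟩, p ⟨a, ha⟩,
              Fin.lt_def.mpr (by show (p ⟨a + 1, hab⟩).val < a; omega),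
              Fin.lt_def.mpr (by show a < a + 1; omega),
              Fin.lt_def.mpr (by show a + 1 < (p ⟨a, ha⟩).val; omega),
              hInv _, rfl⟩)
  have ha0 : m + 1 < k := by omega
  have h0 := hin (m + 1) ha0 (by omega) (by omega)
  have hne0 : (p ⟨m + 1, ha0⟩).val ≠ m + 1 := fun h => hFpf _ (Fin.ext h)
  have hlt0 : m + 1 < (p ⟨m + 1, ha0⟩).val := by omega
  exact descent k (m + 1) ha0 (by omega) (by omega) hlt0
    (by have := (p ⟨m + 1, ha0⟩).isLt; omega)

set_option maxHeartbeats 4000000 in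
lemma adopted_aux (G : Type) :
    ∀ l : ℕ, ∀ (k : ℕ) (p : Fin k → Fin k) (g : Fin k → G),
      (∀ i, p (p i) = i) → (∀ i, p i ≠ i) →
      (¬ ∃ a b c d : Fin k, a < b ∧ b < c ∧ c < d ∧ p a = c ∧ p b = d) →
      IsAdoptedFun p g →
      ∀ (m : ℕ) (hm : m + l < k), (p ⟨m, by omega⟩).val = m + l →
      g ⟨m, by omega⟩ = g ⟨(m + l + 1) % k, Nat.mod_lt _ (by omega)⟩ ∧
      g ⟨(m + 1) % k, Nat.mod_lt _ (by omega)⟩ = g ⟨m + l, hm⟩ := by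
  intro l
  induction l using Nat.strong_induction_on with
  | _ l IH =>
  intro k p g hInv hFpf hNC hg m hm hb
  have hl0 : l ≠ 0 := by
    intro h
    subst h
    exact hFpf ⟨m, by omega⟩ (Fin.ext hb)
  cases hg with
  | base p g hne =>
    have e1 : m = (m + l + 1) % 2 := by omega
    have e2 : (m + 1) % 2 = m + l := by omega
    exact ⟨fin_gcongr g e1, fin_gcongr g e2⟩
  | step hk p g h1 h2 h3 =>
    by_cases hl1 : l = 1
    · subst hl1
      refine ⟨h1 m (by omega) hb, fin_gcongr g (Nat.mod_eq_of_lt (by omega))⟩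
    · have hl2 : 2 ≤ l := by omega
      obtain ⟨m', hm1, hm2, hm3⟩ := existsAdjacent p hInv hFpf hNC m l hl2 hm hb
      have hl3 : 3 ≤ l := by omega
      have hm'k : m' + 1 < k := by omega
      have hm'b : (p ⟨m', by omega⟩).val = m' + 1 := hm3 (by omega)
      have hadj := h3 m' hm'k hm'b
      obtain ⟨hInv', hFpf', hNC'⟩ := delPair_props hm'k p hInv hFpf hNC hm'b
      have hm2k : m' + 2 < k := by omega
      have hmk2 : m < k - 2 := by omega
      have hblock : ∀ (h : m < k - 2), (delPairFun p m' ⟨m, h⟩).val = m + (l - 2) := by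
        intro h
        have h0 := congrArg Fin.val (skip2_delPairFun hm'k p hInv hm'b ⟨m, h⟩)
        have hsm : skip2 m' (⟨m, h⟩ : Fin (k - 2)) = ⟨m, by omega⟩ := by
          apply Fin.ext
          rw [skip2_val]
          show (if m < m' then m else m + 2) = m
          rw [if_pos hm1]
        rw [hsm] at h0
        have hbv : (p (⟨m, by omega⟩ : Fin k)).val = m + l := hb
        rw [skip2_val, hbv] at h0
        split at h0 <;> omega
      have hmm : m + (l - 2) < k - 2 := by omega
      obtain ⟨IA, IB⟩ := IH (l - 2) (by omega) (k - 2) (delPairFun p m')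
        (fun j => g (seqSkip m' j)) hInv' hFpf' hNC' hadj m hmm (hblock _)
      have gs : ∀ (a : ℕ) (h : a < k - 2) (i : Fin k),
          (if a ≤ m' then a else a + 2) = i.val → g (seqSkip m' ⟨a, h⟩) = g i := by
        intro a h i hv
        apply fin_gcongr g
        rw [seqSkip_val hm2k]
        show (if a ≤ m' then a else a + 2) = i.val
        exact hv
      have IA' : g (seqSkip m' ⟨m, hmk2⟩)
          = g (seqSkip m' ⟨(m + (l - 2) + 1) % (k - 2), Nat.mod_lt _ (by omega)⟩) := IA
      have IB' : g (seqSkip m' ⟨(m + 1) % (k - 2), Nat.mod_lt _ (by omega)⟩)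
          = g (seqSkip m' ⟨m + (l - 2), hmm⟩) := IB
      have hr : (m + (l - 2) + 1) % (k - 2) = (m + l - 1) % (k - 2) := by
        rw [show m + (l - 2) + 1 = m + l - 1 by omega]
      constructor
      · -- g m = g ((m+l+1) % k)
        refine ((gs m hmk2 ⟨m, by omega⟩ (by rw [if_pos (Nat.le_of_lt hm1)])).symm).trans
          (IA'.trans ?_)
        by_cases hend : m + l + 1 < k
        · have e1 : (m + l - 1) % (k - 2) = m + l - 1 := Nat.mod_eq_of_lt (by omega)
          have e2 : (m + l + 1) % k = m + l + 1 := Nat.mod_eq_of_lt hend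
          apply gs
          rw [hr, e1, if_neg (by omega)]
          show m + l - 1 + 2 = (m + l + 1) % k
          rw [e2]
          omega
        · have hke : m + l + 1 = k := by omega
          have e1 : (m + l - 1) % (k - 2) = 0 := by
            rw [show m + l - 1 = k - 2 by omega]
            exact Nat.mod_self _
          have e2 : (m + l + 1) % k = 0 := by
            rw [hke]
            exact Nat.mod_self _
          apply gs
          rw [hr, e1, if_pos (Nat.zero_le _)]
          show 0 = (m + l + 1) % k
          rw [e2]
      · -- g ((m+1) % k) = g (m+l)
        have e0 : (m + 1) % (k - 2) = m + 1 := Nat.mod_eq_of_lt (by omega)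
        have hL : g (⟨(m + 1) % k, Nat.mod_lt _ (by omega)⟩ : Fin k)
            = g (seqSkip m' ⟨(m + 1) % (k - 2), Nat.mod_lt _ (by omega)⟩) := by
          refine (gs _ _ _ ?_).symm
          rw [e0, if_pos (by omega)]
          show m + 1 = (m + 1) % k
          rw [Nat.mod_eq_of_lt (by omega)]
        refine hL.trans (IB'.trans ?_)
        by_cases hcase : m' = m + (l - 2)
        · have hR : g (seqSkip m' ⟨m + (l - 2), hmm⟩) = g (⟨m', by omega⟩ : Fin k) := by
            apply gs
            rw [if_pos (by omega)]
            show m + (l - 2) = m'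
            omega
          have hstep := h1 m' hm'k hm'b
          have e3 : (m' + 2) % k = m + l := by
            rw [Nat.mod_eq_of_lt (by omega)]
            omega
          refine hR.trans (hstep.trans (fin_gcongr g ?_))
          show (m' + 2) % k = m + l
          exact e3
        · apply gs
          rw [if_neg (by omega)]
          show m + (l - 2) + 2 = m + l
          omega

/-- If `(g_1,…,g_k)` is a `π`-adopted sequence for a non-crossing
pair-partition `π` of `{1,…,k}` and `{m, m+l} ∈ π` for some `l > 1`, then
`g_m = g_{m+l+1}` and `g_{m+1} = g_{m+l}` (indices cyclic). -/

theorem adopted_block_endpoints (k : ℕ) (hk : k ≠ 0) (hke : Even k)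
    (π : PairPartition k) (hnc : π.NonCrossing)
    (G : Type) [Countable G] (g : Fin k → G) (hg : π.IsAdopted g)
    (m : Fin k) (l : ℕ) (hl : 1 < l) (hml : m.val + l < k)
    (hb : π.pair m = ⟨m.val + l, hml⟩) :
    g m = g (cycAdd m (l + 1)) ∧ g (cycSucc m) = g ⟨m.val + l, hml⟩ := by
  obtain ⟨h1, h2⟩ := adopted_aux G l k π.pair g π.involutive π.pair_ne hnc hg
    m.val hml (congrArg Fin.val hb)
  exact ⟨h1, h2⟩
end

section
/- Let k ∈ ℕ and let π be a partition of {1,...,k} whose number of blocks r satisfies r ≠ k/2. Then lim_{N→∞} N^{−(1+k/2)} · Σ_{(i_1,...,i_k) ∈ P_N^{-1}(π)} ( ∏_{j=1}^k α(|i_j − i_{j+1}|/N) ) · E[ ∏_{j=1}^k X^{(N)}_{i_j i_{j+1}} ] = 0, where i_{k+1} := i_1. -/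
open MeasureTheory Filter Asymptotics ProbabilityTheory
open scoped Classical

/-! ### Auxiliary lemmas for the proof of Statement 4 -/

section Aux

lemma aux_prod_le {k : ℕ} (hk : 1 ≤ k) (a : Fin k → ℝ) (ha : ∀ j, 0 ≤ a j) :
    ∏ j, a j ≤ ∑ j, a j ^ k := by
  have hne : (Finset.univ : Finset (Fin k)).Nonempty := ⟨⟨0, hk⟩, Finset.mem_univ _⟩
  obtain ⟨j0, -, hj0⟩ := Finset.exists_max_image Finset.univ a hne
  calc ∏ j, a j ≤ ∏ _j : Fin k, a j0 :=
        Finset.prod_le_prod (fun j _ => ha j) (fun j _ => hj0 j (Finset.mem_univ j))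
    _ = a j0 ^ k := by simp
    _ ≤ ∑ j, a j ^ k :=
        Finset.single_le_sum (fun j _ => pow_nonneg (ha j) k) (Finset.mem_univ j0)

lemma aux_exp_bound {Ω : Type} [MeasureSpace Ω] {k : ℕ} (hk : 1 ≤ k)
    (Y : Fin k → Ω → ℝ) (R : ℝ)
    (hint : ∀ j, Integrable (fun ω => |Y j ω| ^ k))
    (hmom : ∀ j, (∫ ω, |Y j ω| ^ k) ≤ R) :
    |∫ ω, ∏ j, Y j ω| ≤ k * R := by
  have h1 : |∫ ω, ∏ j, Y j ω| ≤ ∫ ω, ∏ j, |Y j ω| := by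
    simpa [Real.norm_eq_abs, Finset.abs_prod] using
      norm_integral_le_integral_norm (μ := (volume : Measure Ω)) (f := fun ω => ∏ j, Y j ω)
  have h2 : (∫ ω, ∏ j, |Y j ω|) ≤ ∫ ω, ∑ j, |Y j ω| ^ k := by
    apply integral_mono_of_nonneg
    · exact ae_of_all _ fun ω => Finset.prod_nonneg fun j _ => abs_nonneg _
    · exact integrable_finset_sum _ fun j _ => hint j
    · exact ae_of_all _ fun ω => aux_prod_le hk _ (fun j => abs_nonneg _)
  have h3 : (∫ ω, ∑ j, |Y j ω| ^ k) = ∑ j, ∫ ω, |Y j ω| ^ k :=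
    integral_finset_sum _ fun j _ => hint j
  have h4 : (∑ j, ∫ ω, |Y j ω| ^ k) ≤ ∑ _j : Fin k, R := Finset.sum_le_sum fun j _ => hmom j
  have h5 : (∑ _j : Fin k, R) = k * R := by simp [mul_comm]
  linarith

end Aux

section Counting

variable {k N : ℕ}

/-- `t` (0-based position in `Fin k`) is the smallest element of its block. -/
def Leader' (π : Finpartition (Finset.univ : Finset (Fin k))) (t : ℕ) : Prop :=
  ∃ b ∈ π.parts, (∃ l ∈ b, (l : Fin k).val = t) ∧ ∀ m ∈ b, t ≤ m.val

noncomputable def cFac (π : Finpartition (Finset.univ : Finset (Fin k))) (N B t : ℕ) : ℕ :=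
  if t = 0 ∨ Leader' π (t - 1) then N else B

noncomputable def dFac (π : Finpartition (Finset.univ : Finset (Fin k))) (N t : ℕ) : ℕ :=
  if t = 0 ∨ Leader' π (t - 1) then N else 1

/-- Restriction of a tuple to its first `t` coordinates. -/
def res (N k t : ℕ) (i : Fin k → Fin N) : Fin (min t k) → Fin N :=
  fun j => i ⟨j.val, by have := j.isLt; omega⟩

lemma count_step (hk1 : 1 ≤ k) {t : ℕ} (ht : t + 1 ≤ k)
    (E : Fin N × Fin N → Fin N × Fin N → Prop)
    (B : ℕ) (hB : 1 ≤ B) (hC2 : cond2 E B)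
    (π : Finpartition (Finset.univ : Finset (Fin k))) :
    (((Set.toFinite (PinvPartition E π)).toFinset).image (res N k (t+1))).card ≤
      cFac π N B t * (((Set.toFinite (PinvPartition E π)).toFinset).image (res N k t)).card := by
  classical
  set P := (Set.toFinite (PinvPartition E π)).toFinset with hP
  have drop_pf : ∀ j : Fin (min t k), j.val < min (t+1) k := fun j => by
    have := j.isLt; omega
  set drop : (Fin (min (t+1) k) → Fin N) → (Fin (min t k) → Fin N) :=
    fun g j => g ⟨j.val, drop_pf j⟩ with hdrop
  have htk : t < k := by omega
  have htlt : t < min (t+1) k := by omega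
  have himg : (P.image (res N k (t+1))).image drop = P.image (res N k t) := by
    rw [Finset.image_image]
    apply Finset.image_congr
    intro i _
    rfl
  have key := Finset.card_le_mul_card_image (f := drop) (P.image (res N k (t+1)))
    (cFac π N B t) ?_
  · rw [himg] at key; exact key
  intro a _
  -- injectivity of the last coordinate on the fiber
  have hinj : Set.InjOn (fun g : Fin (min (t+1) k) → Fin N => g ⟨t, htlt⟩)
      ((P.image (res N k (t+1))).filter (fun g => drop g = a)) := by
    intro g hg g' hg' hgg
    beta_reduce at hgg
    simp only [Finset.coe_filter, Set.mem_setOf_eq] at hg hg'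
    funext j
    have hjlt := j.isLt
    rcases Nat.lt_or_ge j.val t with hj | hj
    · have hjv : j.val < min t k := by omega
      have : drop g ⟨j.val, hjv⟩ = drop g' ⟨j.val, hjv⟩ := by rw [hg.2, hg'.2]
      simpa [hdrop] using this
    · have hjv : j.val = t := by omega
      have hjt : j = ⟨t, htlt⟩ := Fin.ext hjv
      rw [hjt]; exact hgg
  by_cases hc : t = 0 ∨ Leader' π (t - 1)
  · rw [cFac, if_pos hc]
    calc ((P.image (res N k (t+1))).filter (fun g => drop g = a)).card
        ≤ (Finset.univ : Finset (Fin N)).card :=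
          Finset.card_le_card_of_injOn _ (fun _ _ => Finset.mem_univ _) hinj
      _ = N := by simp
  · rw [cFac, if_neg hc]
    push_neg at hc
    obtain ⟨ht0, hnl⟩ := hc
    have ht1 : 1 ≤ t := Nat.one_le_iff_ne_zero.mpr ht0
    have ht1k : t - 1 < k := by omega
    -- the block containing position t-1
    obtain ⟨b, hbmem, hbin⟩ := π.exists_mem (Finset.mem_univ (⟨t - 1, ht1k⟩ : Fin k))
    rw [Leader'] at hnl; push_neg at hnl
    obtain ⟨m, hmb, hmlt⟩ := hnl b hbmem ⟨⟨t-1, ht1k⟩, hbin, rfl⟩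
    -- indices into `a`
    have hm1 : m.val < min t k := by omega
    have hm2 : m.val + 1 < min t k := by omega
    have hm3 : t - 1 < min t k := by omega
    set Sset : Set (Fin N) := {s | E (a ⟨m.val, hm1⟩, a ⟨m.val + 1, hm2⟩) (a ⟨t-1, hm3⟩, s)}
      with hSset
    have hmap : ∀ g ∈ (P.image (res N k (t+1))).filter (fun g => drop g = a),
        g ⟨t, htlt⟩ ∈ (Set.toFinite Sset).toFinset := by
      intro g hg
      rw [Finset.mem_filter] at hg
      obtain ⟨hg1, hg2⟩ := hg
      obtain ⟨i, hiP, hires⟩ := Finset.mem_image.mp hg1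
      rw [hP, Set.Finite.mem_toFinset] at hiP
      have hEi := (hiP m ⟨t-1, ht1k⟩).mpr ⟨b, hbmem, hmb, hbin⟩
      have hcm : cycSucc m = ⟨m.val + 1, by omega⟩ :=
        Fin.ext (Nat.mod_eq_of_lt (by omega))
      have hct : cycSucc (⟨t-1, ht1k⟩ : Fin k) = ⟨t, htk⟩ :=
        Fin.ext (by show (t - 1 + 1) % k = t
                    rw [show t - 1 + 1 = t by omega]
                    exact Nat.mod_eq_of_lt htk)
      rw [hcm, hct] at hEi
      -- identify the entries of i with entries of a and g
      have hia : ∀ (u : ℕ) (hu : u < min t k), i ⟨u, by omega⟩ = a ⟨u, hu⟩ := by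
        intro u hu
        rw [← hg2, ← hires]
        rfl
      have hit : i ⟨t, htk⟩ = g ⟨t, htlt⟩ := by rw [← hires]; rfl
      rw [Set.Finite.mem_toFinset, hSset, Set.mem_setOf_eq]
      have e1 : i m = a ⟨m.val, hm1⟩ := by
        have := hia m.val hm1
        rwa [Fin.eta] at this
      rw [← e1, ← hia (m.val+1) hm2, ← hia (t-1) hm3, ← hit]
      exact hEi
    calc ((P.image (res N k (t+1))).filter (fun g => drop g = a)).card
        ≤ ((Set.toFinite Sset).toFinset).card :=
          Finset.card_le_card_of_injOn _ hmap hinj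
      _ = Sset.ncard := (Set.ncard_eq_toFinset_card Sset (Set.toFinite Sset)).symm
      _ ≤ B := hC2 _ _ _

lemma count_main {k N : ℕ} (hk : 1 ≤ k)
    (E : Fin N × Fin N → Fin N × Fin N → Prop) (B : ℕ) (hB : 1 ≤ B)
    (hC2 : cond2 E B) (π : Finpartition (Finset.univ : Finset (Fin k))) :
    ((Set.toFinite (PinvPartition E π)).toFinset).card ≤ N ^ (1 + π.parts.card) * B ^ k := by
  classical
  set P := (Set.toFinite (PinvPartition E π)).toFinset with hP
  rcases Nat.eq_zero_or_pos N with hN | hN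
  · subst hN
    have hie : IsEmpty (Fin k → Fin 0) := ⟨fun f => (f ⟨0, hk⟩).elim0⟩
    have h0 : P.card ≤ Fintype.card (Fin k → Fin 0) := Finset.card_le_univ P
    rw [Fintype.card_eq_zero] at h0
    exact le_trans h0 (Nat.zero_le _)
  have main : ∀ t, t ≤ k → (P.image (res N k t)).card ≤ ∏ s ∈ Finset.range t, cFac π N B s := by
    intro t
    induction t with
    | zero =>
      intro _
      simp only [Finset.range_zero, Finset.prod_empty]
      refine Finset.card_le_one.mpr (fun a _ b _ => funext fun j => ?_)
      exact absurd j.isLt (by omega)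
    | succ t ih =>
      intro ht
      calc (P.image (res N k (t+1))).card ≤ cFac π N B t * (P.image (res N k t)).card :=
            count_step hk ht E B hB hC2 π
        _ ≤ cFac π N B t * ∏ s ∈ Finset.range t, cFac π N B s :=
            Nat.mul_le_mul_left _ (ih (by omega))
        _ = ∏ s ∈ Finset.range (t+1), cFac π N B s := by
            rw [Finset.prod_range_succ, mul_comm]
  have hcard : P.card = (P.image (res N k k)).card := by
    rw [Finset.card_image_of_injOn]
    intro i _ i' _ hii
    funext j
    have hjv : j.val < min k k := by have := j.isLt; omega
    have h2 : res N k k i ⟨j.val, hjv⟩ = res N k k i' ⟨j.val, hjv⟩ := by rw [hii]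
    simpa [res] using h2
  set r := π.parts.card with hr
  have hfiltcard : ((Finset.range k).filter (fun t => t = 0 ∨ Leader' π (t - 1))).card
      ≤ 1 + r := by
    set F := (Finset.range k).filter (fun t => t = 0 ∨ Leader' π (t - 1)) with hF
    have hsub : F ⊆ insert 0 (F.erase 0) := by
      intro x hx
      rcases Nat.eq_zero_or_pos x with h | h
      · subst h; exact Finset.mem_insert_self _ _
      · exact Finset.mem_insert_of_mem (Finset.mem_erase.mpr ⟨by omega, hx⟩)
    have h1 : F.card ≤ (F.erase 0).card + 1 :=
      le_trans (Finset.card_le_card hsub) (Finset.card_insert_le _ _)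
    have h2 : (F.erase 0).card ≤ r := by
      rw [hr]
      apply Finset.card_le_card_of_injOn
        (fun t => if h : Leader' π (t - 1) then h.choose else ∅)
      · intro t htmem
        rw [Finset.mem_coe, hF, Finset.mem_erase, Finset.mem_filter] at htmem
        have hL : Leader' π (t - 1) := by
          rcases htmem.2.2 with h | h
          · exact absurd h htmem.1
          · exact h
        beta_reduce
        rw [dif_pos hL]
        exact hL.choose_spec.1
      · intro t htmem t' htmem' hFF
        rw [Finset.mem_coe, hF, Finset.mem_erase, Finset.mem_filter] at htmem htmem'
        have hL : Leader' π (t - 1) := by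
          rcases htmem.2.2 with h | h
          · exact absurd h htmem.1
          · exact h
        have hL' : Leader' π (t' - 1) := by
          rcases htmem'.2.2 with h | h
          · exact absurd h htmem'.1
          · exact h
        beta_reduce at hFF
        rw [dif_pos hL, dif_pos hL'] at hFF
        obtain ⟨-, ⟨l, hlb, hlv⟩, hmin⟩ := hL.choose_spec
        obtain ⟨-, ⟨l', hlb', hlv'⟩, hmin'⟩ := hL'.choose_spec
        rw [hFF] at hlb hmin
        have e1 : t - 1 ≤ l'.val := hmin l' hlb'
        have e2 : t' - 1 ≤ l.val := hmin' l hlb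
        have ht0 : t ≠ 0 := htmem.1
        have ht0' : t' ≠ 0 := htmem'.1
        omega
    omega
  have hprod : (∏ s ∈ Finset.range k, cFac π N B s) ≤ N ^ (1 + r) * B ^ k := by
    have h1 : ∀ s ∈ Finset.range k, cFac π N B s ≤ B * dFac π N s := by
      intro s _
      unfold cFac dFac
      by_cases hcs : s = 0 ∨ Leader' π (s - 1)
      · rw [if_pos hcs, if_pos hcs]
        exact Nat.le_mul_of_pos_left _ hB
      · rw [if_neg hcs, if_neg hcs]
        simp
    have e1 : (∏ s ∈ (Finset.range k).filter (fun t => t = 0 ∨ Leader' π (t - 1)), dFac π N s)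
        = N ^ ((Finset.range k).filter (fun t => t = 0 ∨ Leader' π (t - 1))).card := by
      rw [Finset.prod_congr rfl (fun x hx => show dFac π N x = N by
        unfold dFac
        exact if_pos (Finset.mem_filter.mp hx).2)]
      exact Finset.prod_const N
    have e2 : (∏ s ∈ (Finset.range k).filter (fun t => ¬ (t = 0 ∨ Leader' π (t - 1))), dFac π N s) = 1 :=
      Finset.prod_eq_one (fun x hx => by
        unfold dFac
        exact if_neg (Finset.mem_filter.mp hx).2)
    calc (∏ s ∈ Finset.range k, cFac π N B s) ≤ ∏ s ∈ Finset.range k, (B * dFac π N s) :=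
          Finset.prod_le_prod' h1
      _ = B ^ k * ∏ s ∈ Finset.range k, dFac π N s := by
          rw [Finset.prod_mul_distrib, Finset.prod_const, Finset.card_range]
      _ = B ^ k * N ^ ((Finset.range k).filter (fun t => t = 0 ∨ Leader' π (t - 1))).card := by
          rw [← Finset.prod_filter_mul_prod_filter_not (Finset.range k)
            (fun t => t = 0 ∨ Leader' π (t - 1)) (dFac π N), e1, e2, mul_one]
      _ ≤ B ^ k * N ^ (1 + r) :=
          Nat.mul_le_mul_left _ (Nat.pow_le_pow_right hN hfiltcard)
      _ = N ^ (1 + r) * B ^ k := mul_comm _ _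
  calc P.card = (P.image (res N k k)).card := hcard
    _ ≤ ∏ s ∈ Finset.range k, cFac π N B s := main k le_rfl
    _ ≤ N ^ (1 + r) * B ^ k := hprod

end Counting

lemma singleton_integral_zero
    {Ω : Type} [MeasureSpace Ω] [IsProbabilityMeasure (volume : Measure Ω)]
    {N k : ℕ} (E : Fin N × Fin N → Fin N × Fin N → Prop) (hE : Equivalence E)
    (X : Fin N → Fin N → Ω → ℝ) (hXmeas : ∀ i j, Measurable (X i j))
    (hXcent : ∀ i j, ∫ ω, X i j ω = 0)
    (hind : IndepClasses E hE X)
    (π : Finpartition (Finset.univ : Finset (Fin k)))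
    (l₀ : Fin k) (hb : {l₀} ∈ π.parts)
    (i : Fin k → Fin N) (hi : i ∈ PinvPartition E π) :
    ∫ ω, ∏ j : Fin k, X (i j) (i (cycSucc j)) ω = 0 := by
  classical
  set st := Setoid.mk E hE with hst
  set edge : Fin k → Fin N × Fin N := fun l => (i l, i (cycSucc l)) with hedge
  set f : (c : Quotient st) → Ω → ({p : Fin N × Fin N // Quotient.mk st p = c} → ℝ) :=
    fun c ω p => X p.1.1 p.1.2 ω with hf
  have hfmeas : ∀ c, Measurable (fun ω => fun p : {p : Fin N × Fin N // Quotient.mk st p = c} =>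
      X p.1.1 p.1.2 ω) :=
    fun c => measurable_pi_lambda _ (fun p => hXmeas _ _)
  set c₀ : Quotient st := Quotient.mk st (edge l₀) with hc₀
  set T : Finset (Quotient st) :=
    (Finset.univ.erase l₀).image (fun l => Quotient.mk st (edge l)) with hT
  have hdisj : Disjoint ({c₀} : Finset (Quotient st)) T := by
    rw [Finset.disjoint_left]
    intro c hc hcT
    rw [Finset.mem_singleton] at hc
    subst hc
    rw [hT, Finset.mem_image] at hcT
    obtain ⟨l, hl, hlc⟩ := hcT
    have hEl : E (edge l) (edge l₀) := Quotient.exact hlc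
    obtain ⟨b, hbmem, hlb, hl0b⟩ := (hi l l₀).mp hEl
    have : b = {l₀} := π.eq_of_mem_parts hbmem hb hl0b (Finset.mem_singleton_self _)
    rw [this, Finset.mem_singleton] at hlb
    exact (Finset.mem_erase.mp hl).1 hlb
  have hIF := hind.indepFun_finset {c₀} T hdisj hfmeas
  set φ : (∀ c : ({c₀} : Finset (Quotient st)),
      {p : Fin N × Fin N // Quotient.mk st p = c} → ℝ) → ℝ :=
    fun y => y ⟨c₀, Finset.mem_singleton_self _⟩ ⟨edge l₀, rfl⟩ with hφ
  set ψ : (∀ c : (T : Finset (Quotient st)),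
      {p : Fin N × Fin N // Quotient.mk st p = c} → ℝ) → ℝ :=
    fun y => ∏ l ∈ (Finset.univ.erase l₀).attach,
      y ⟨Quotient.mk st (edge l.1), Finset.mem_image_of_mem _ l.2⟩ ⟨edge l.1, rfl⟩ with hψ
  have hφm : Measurable φ := (measurable_pi_apply _).comp (measurable_pi_apply _)
  have hψm : Measurable ψ :=
    Finset.measurable_prod _ (fun l _ => (measurable_pi_apply _).comp (measurable_pi_apply _))
  have hIF2 := hIF.comp hφm hψm
  have hfun1 : (φ ∘ fun a (c : ({c₀} : Finset (Quotient st))) => f c a)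
      = fun ω => X (i l₀) (i (cycSucc l₀)) ω := rfl
  have hfun2 : (ψ ∘ fun a (c : (T : Finset (Quotient st))) => f c a)
      = fun ω => ∏ l ∈ Finset.univ.erase l₀, X (i l) (i (cycSucc l)) ω := by
    funext ω
    show (∏ l ∈ (Finset.univ.erase l₀).attach, X (i l.1) (i (cycSucc l.1)) ω)
        = ∏ l ∈ Finset.univ.erase l₀, X (i l) (i (cycSucc l)) ω
    exact Finset.prod_attach _ (fun l => X (i l) (i (cycSucc l)) ω)
  rw [hfun1, hfun2] at hIF2
  have hsplit : (fun ω => ∏ j : Fin k, X (i j) (i (cycSucc j)) ω)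
      = (fun ω => X (i l₀) (i (cycSucc l₀)) ω) *
        (fun ω => ∏ l ∈ Finset.univ.erase l₀, X (i l) (i (cycSucc l)) ω) := by
    funext ω
    exact (Finset.mul_prod_erase Finset.univ _ (Finset.mem_univ l₀)).symm
  rw [hsplit, hIF2.integral_mul_eq_mul_integral ((hXmeas _ _).aestronglyMeasurable)
    ((Finset.measurable_prod _ (fun l _ => hXmeas _ _)).aestronglyMeasurable),
    hXcent, zero_mul]

lemma exists_singleton_block {k : ℕ} (π : Finpartition (Finset.univ : Finset (Fin k)))
    (h : k < 2 * π.parts.card) : ∃ l₀ : Fin k, {l₀} ∈ π.parts := by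
  by_contra hcon
  push_neg at hcon
  have h2 : ∀ b ∈ π.parts, 2 ≤ b.card := by
    intro b hbmem
    have hne := π.nonempty_of_mem_parts hbmem
    by_cases hb1 : b.card = 1
    · obtain ⟨a, ha⟩ := Finset.card_eq_one.mp hb1
      exact absurd (ha ▸ hbmem) (hcon a)
    · have := Finset.card_pos.mpr hne; omega
  have hsum := π.sum_card_parts
  have hle : π.parts.card • 2 ≤ ∑ b ∈ π.parts, b.card :=
    Finset.card_nsmul_le_sum _ _ _ h2
  rw [hsum, Finset.card_univ, Fintype.card_fin] at hle
  simp only [smul_eq_mul] at hle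
  omega


/-- For a partition `π` of `{1,…,k}` whose number of blocks `r`
satisfies `r ≠ k/2`, the normalized sum over `P_N^{-1}(π)` of the weighted expectations
vanishes in the limit `N → ∞`. -/
theorem Pinv_sum_vanishes_of_blocks_ne (k : ℕ)
    (E : (N : ℕ) → (Fin N × Fin N → Fin N × Fin N → Prop))
    (hE : ∀ N, Equivalence (E N))
    (hEsymm : ∀ N (p q : Fin N), E N (p, q) (q, p))
    (hC1 : (fun N => (cond1Count (E N) : ℝ)) =o[Filter.atTop] fun N => (N : ℝ) ^ 2)
    (B : ℕ) (hB : 1 ≤ B) (hC2 : ∀ N, cond2 (E N) B)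
    (hC3 : (fun N => (cond3Count (E N) : ℝ)) =o[Filter.atTop] fun N => (N : ℝ) ^ 2)
    (Ω : Type) [MeasureSpace Ω] [IsProbabilityMeasure (volume : Measure Ω)]
    (X : (N : ℕ) → Fin N → Fin N → Ω → ℝ)
    (hXmeas : ∀ N i j, Measurable (X N i j))
    (hXsymm : ∀ N i j, X N i j = X N j i)
    (hXcent : ∀ N i j, ∫ ω, X N i j ω = 0)
    (hXvar : ∀ N i j, ∫ ω, (X N i j ω) ^ 2 = 1)
    (hXint : ∀ (p : ℕ) N i j, Integrable fun ω => |X N i j ω| ^ p)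
    (hXmom : ∀ p : ℕ, ∃ R : ℝ, ∀ N i j, (∫ ω, |X N i j ω| ^ p) ≤ R)
    (hXindep : ∀ N, IndepClasses (E N) (hE N) (X N))
    (α : ℝ → ℝ)
    (hαbdd : ∃ C : ℝ, ∀ x ∈ Set.Icc (0:ℝ) 1, |α x| ≤ C)
    (hαae : ∀ᵐ x ∂(volume.restrict (Set.Icc (0:ℝ) 1)), ContinuousAt α x)
    (π : Finpartition (Finset.univ : Finset (Fin k)))
    (hr : 2 * π.parts.card ≠ k) :
    Filter.Tendsto (fun N : ℕ =>
      ((N : ℝ) ^ ((1 : ℝ) + (k : ℝ) / 2))⁻¹ *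
        ∑ᶠ i ∈ PinvPartition (E N) π,
          (∏ j : Fin k, α (|((i j).val : ℝ) - ((i (cycSucc j)).val : ℝ)| / N)) *
            ∫ ω, ∏ j : Fin k, X N (i j) (i (cycSucc j)) ω)
      Filter.atTop (nhds 0) := by

  classical
  rcases lt_trichotomy (2 * π.parts.card) k with hlt | heq | hgt
  · -- fewer than `k/2` blocks: counting argument
    have hk1 : 1 ≤ k := by omega
    obtain ⟨C, hC⟩ := hαbdd
    have hC0 : 0 ≤ C :=
      le_trans (abs_nonneg _) (hC 0 (Set.mem_Icc.mpr ⟨le_rfl, zero_le_one⟩))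
    obtain ⟨R, hR⟩ := hXmom k
    have hR0 : 0 ≤ R := by
      refine le_trans ?_ (hR 1 0 0)
      exact integral_nonneg (fun ω => pow_nonneg (abs_nonneg _) k)
    set M : ℝ := (B : ℝ) ^ k * (C ^ k * (k * R)) with hM
    have hM0 : 0 ≤ M := by positivity
    apply squeeze_zero_norm' (a := fun N : ℕ => M * (N : ℝ) ^ (-(1/2 : ℝ)))
    · filter_upwards [eventually_ge_atTop 1] with N hN1
      have hN0 : (0:ℝ) < N := by exact_mod_cast Nat.lt_of_lt_of_le Nat.zero_lt_one hN1
      have hN1R : (1:ℝ) ≤ N := by exact_mod_cast hN1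
      set P := (Set.toFinite (PinvPartition (E N) π)).toFinset with hP
      set F : (Fin k → Fin N) → ℝ := fun i =>
        (∏ j : Fin k, α (|((i j).val : ℝ) - ((i (cycSucc j)).val : ℝ)| / N)) *
          ∫ ω, ∏ j : Fin k, X N (i j) (i (cycSucc j)) ω with hF
      have hterm : ∀ i ∈ P, |F i| ≤ C ^ k * (k * R) := by
        intro i _
        rw [hF, abs_mul]
        have h1 : |∏ j : Fin k, α (|((i j).val : ℝ) - ((i (cycSucc j)).val : ℝ)| / N)|
            ≤ C ^ k := by
          rw [Finset.abs_prod]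
          calc (∏ j : Fin k, |α (|((i j).val : ℝ) - ((i (cycSucc j)).val : ℝ)| / N)|)
              ≤ ∏ _j : Fin k, C := by
                apply Finset.prod_le_prod (fun j _ => abs_nonneg _)
                intro j _
                apply hC
                rw [Set.mem_Icc]
                constructor
                · positivity
                · rw [div_le_one hN0]
                  have ha : ((i j).val : ℝ) < N := by exact_mod_cast (i j).isLt
                  have hb : ((i (cycSucc j)).val : ℝ) < N := by
                    exact_mod_cast (i (cycSucc j)).isLt
                  have ha0 : (0:ℝ) ≤ ((i j).val : ℝ) := Nat.cast_nonneg _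
                  have hb0 : (0:ℝ) ≤ ((i (cycSucc j)).val : ℝ) := Nat.cast_nonneg _
                  rw [abs_le]
                  constructor <;> linarith
            _ = C ^ k := by simp
        have h2 : |∫ ω, ∏ j : Fin k, X N (i j) (i (cycSucc j)) ω| ≤ k * R :=
          aux_exp_bound hk1 _ R (fun j => hXint k N _ _) (fun j => hR N _ _)
        exact mul_le_mul h1 h2 (abs_nonneg _) (pow_nonneg hC0 k)
      have hsum : |∑ᶠ i ∈ PinvPartition (E N) π, F i| ≤ (P.card : ℝ) * (C ^ k * (k * R)) := by
        rw [finsum_mem_eq_finite_toFinset_sum _ (Set.toFinite _)]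
        calc |∑ i ∈ P, F i| ≤ ∑ i ∈ P, |F i| := Finset.abs_sum_le_sum_abs _ _
          _ ≤ P.card • (C ^ k * (k * R)) := Finset.sum_le_card_nsmul _ _ _ hterm
          _ = (P.card : ℝ) * (C ^ k * (k * R)) := nsmul_eq_mul _ _
      have hcard : (P.card : ℝ) ≤ (N : ℝ) ^ (1 + π.parts.card) * (B : ℝ) ^ k := by
        have h := count_main hk1 (E N) B hB (hC2 N) π
        exact_mod_cast h
      have hS : |∑ᶠ i ∈ PinvPartition (E N) π, F i| ≤ (N : ℝ) ^ (1 + π.parts.card) * M := by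
        refine le_trans hsum ?_
        calc (P.card : ℝ) * (C ^ k * (k * R))
            ≤ ((N:ℝ) ^ (1 + π.parts.card) * (B:ℝ) ^ k) * (C ^ k * (k * R)) :=
              mul_le_mul_of_nonneg_right hcard (by positivity)
          _ = (N:ℝ) ^ (1 + π.parts.card) * M := by rw [hM]; ring
      rw [Real.norm_eq_abs, abs_mul, abs_inv,
        abs_of_pos (Real.rpow_pos_of_pos hN0 ((1:ℝ) + (k:ℝ)/2))]
      have hfin : ((N:ℝ) ^ ((1:ℝ) + (k:ℝ)/2))⁻¹ * |∑ᶠ i ∈ PinvPartition (E N) π, F i|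
          ≤ ((N:ℝ) ^ ((1:ℝ) + (k:ℝ)/2))⁻¹ * ((N : ℝ) ^ (1 + π.parts.card) * M) :=
        mul_le_mul_of_nonneg_left hS
          (inv_nonneg.mpr (Real.rpow_nonneg (le_of_lt hN0) _))
      refine le_trans hfin ?_
      have key : ((N:ℝ) ^ ((1:ℝ) + (k:ℝ)/2))⁻¹ * (N : ℝ) ^ (1 + π.parts.card)
          ≤ (N:ℝ) ^ (-(1/2 : ℝ)) := by
        rw [← Real.rpow_natCast (N:ℝ) (1 + π.parts.card),
          ← Real.rpow_neg (le_of_lt hN0), ← Real.rpow_add hN0]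
        apply Real.rpow_le_rpow_of_exponent_le hN1R
        have hcast : (2 * π.parts.card + 1 : ℝ) ≤ (k : ℝ) := by exact_mod_cast hlt
        push_cast
        linarith
      calc ((N:ℝ) ^ ((1:ℝ) + (k:ℝ)/2))⁻¹ * ((N : ℝ) ^ (1 + π.parts.card) * M)
          = (((N:ℝ) ^ ((1:ℝ) + (k:ℝ)/2))⁻¹ * (N : ℝ) ^ (1 + π.parts.card)) * M := by ring
        _ ≤ (N:ℝ) ^ (-(1/2:ℝ)) * M := mul_le_mul_of_nonneg_right key hM0
        _ = M * (N:ℝ) ^ (-(1/2:ℝ)) := mul_comm _ _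
    · have h1 : Tendsto (fun x : ℝ => x ^ (-(1/2:ℝ))) atTop (nhds 0) :=
        tendsto_rpow_neg_atTop (by norm_num)
      have h2 : Tendsto (fun N : ℕ => (N:ℝ) ^ (-(1/2:ℝ))) atTop (nhds 0) :=
        h1.comp tendsto_natCast_atTop_atTop
      simpa using h2.const_mul M
  · exact absurd heq hr
  · -- more than `k/2` blocks: some block is a singleton, all expectations vanish
    obtain ⟨l₀, hb⟩ := exists_singleton_block π hgt
    have hzero : ∀ N : ℕ, (∑ᶠ i ∈ PinvPartition (E N) π,
        (∏ j : Fin k, α (|((i j).val : ℝ) - ((i (cycSucc j)).val : ℝ)| / N)) *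
          ∫ ω, ∏ j : Fin k, X N (i j) (i (cycSucc j)) ω) = 0 := by
      intro N
      apply finsum_mem_eq_zero_of_forall_eq_zero
      intro i hi
      rw [singleton_integral_zero (E N) (hE N) (X N) (hXmeas N) (hXcent N) (hXindep N)
        π l₀ hb i hi, mul_zero]
    simp only [hzero, mul_zero]
    exact tendsto_const_nhds
end

section
/- Let k ≥ 4 be even and let π be a pair-partition of {1,...,k} containing a block {m, m+1}. Then, as N → ∞, #P_N^{-1}(π) ≤ N · #P_N^{-1}(π̃) + o(N^{1+k/2}), where π̃ = π ∖• {m,m+1} is the induced pair-partition of {1,...,k−2}. -/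
open MeasureTheory Filter Asymptotics ProbabilityTheory
open scoped Classical

namespace PinvLeafAux

lemma cycAdd_recover {k : ℕ} (M t : Fin k) :
    cycAdd M ((t.val + (k - M.val)) % k) = t := by
  have hM := M.isLt
  apply Fin.ext
  show (M.val + (t.val + (k - M.val)) % k) % k = t.val
  rw [Nat.add_mod_mod]
  have h : M.val + (t.val + (k - M.val)) = t.val + k := by omega
  rw [h, Nat.add_mod_right, Nat.mod_eq_of_lt t.isLt]

lemma cycAdd_val_recover {k : ℕ} (M : Fin k) {a : ℕ} (ha : a < k) :
    ((cycAdd M a).val + (k - M.val)) % k = a := by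
  have hM := M.isLt
  show ((M.val + a) % k + (k - M.val)) % k = a
  rw [Nat.mod_add_mod]
  have h : M.val + a + (k - M.val) = a + k := by omega
  rw [h, Nat.add_mod_right, Nat.mod_eq_of_lt ha]

lemma cycAdd_inj {k : ℕ} (M : Fin k) {a b : ℕ} (ha : a < k) (hb : b < k)
    (h : cycAdd M a = cycAdd M b) : a = b := by
  have := congrArg (fun t : Fin k => (t.val + (k - M.val)) % k) h
  simpa [cycAdd_val_recover M ha, cycAdd_val_recover M hb] using this

lemma cycSucc_cycAdd {k : ℕ} (M : Fin k) (a : ℕ) :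
    cycSucc (cycAdd M a) = cycAdd M (a + 1) := by
  apply Fin.ext
  show ((M.val + a) % k + 1) % k = (M.val + (a + 1)) % k
  rw [Nat.mod_add_mod, Nat.add_assoc]

lemma cycAdd_zero {k : ℕ} (M : Fin k) : cycAdd M 0 = M := by
  apply Fin.ext
  show (M.val + 0) % k = M.val
  rw [Nat.add_zero, Nat.mod_eq_of_lt M.isLt]

/-- the index of `p (cycAdd M s)` relative to `M`. -/
def sigF {k : ℕ} (p : Fin k → Fin k) (M : Fin k) (s : ℕ) : ℕ :=
  ((p (cycAdd M s)).val + (k - M.val)) % k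

lemma sigF_lt {k : ℕ} (p : Fin k → Fin k) (M : Fin k) (s : ℕ) : sigF p M s < k :=
  Nat.mod_lt _ M.pos

lemma cycAdd_sigF {k : ℕ} (p : Fin k → Fin k) (M : Fin k) (s : ℕ) :
    cycAdd M (sigF p M s) = p (cycAdd M s) := cycAdd_recover M _

lemma sigF_sigF {k : ℕ} (p : Fin k → Fin k) (hinv : ∀ t, p (p t) = t) (M : Fin k)
    {s : ℕ} (hs : s < k) : sigF p M (sigF p M s) = s := by
  apply cycAdd_inj M (sigF_lt p M _) hs
  rw [cycAdd_sigF, cycAdd_sigF, hinv]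

lemma sigF_ne {k : ℕ} (p : Fin k → Fin k) (hne : ∀ t, p t ≠ t) (M : Fin k)
    (s : ℕ) : sigF p M s ≠ s := by
  intro h
  have h2 : cycAdd M (sigF p M s) = cycAdd M s := by rw [h]
  rw [cycAdd_sigF] at h2
  exact hne _ h2

/-- restriction of a cyclic sequence to its first `r` entries starting at `M`. -/
def resF {k N : ℕ} (M : Fin k) (r : ℕ) (i : Fin k → Fin N) : Fin r → Fin N :=
  fun j => i (cycAdd M j.val)

lemma skip2_val {k m : ℕ} (j : Fin (k - 2)) :
    (skip2 (k := k) m j).val = if j.val < m then j.val else j.val + 2 := by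
  unfold skip2; split_ifs <;> rfl

lemma skip2_inj {k m : ℕ} : Function.Injective (skip2 (k := k) m) := by
  intro a b h
  have h' := congrArg Fin.val h
  rw [skip2_val, skip2_val] at h'
  apply Fin.ext
  split_ifs at h' <;> omega

lemma skip2_ne {k m : ℕ} (j : Fin (k - 2)) :
    (skip2 (k := k) m j).val ≠ m ∧ (skip2 (k := k) m j).val ≠ m + 1 := by
  have := j.isLt
  rw [skip2_val]
  split_ifs <;> omega

lemma pval_ne {k : ℕ} (p : Fin k → Fin k) (hinv : ∀ t, p (p t) = t)
    (m : ℕ) (hm : m + 1 < k) (hb : (p ⟨m, by omega⟩).val = m + 1) (j : Fin (k - 2)) :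
    (p (skip2 m j)).val ≠ m ∧ (p (skip2 m j)).val ≠ m + 1 := by
  have hM1 : p ⟨m, by omega⟩ = ⟨m + 1, hm⟩ := Fin.ext hb
  have ht := skip2_ne (k := k) (m := m) j
  constructor <;> intro h
  · have h2 : p (skip2 m j) = (⟨m, by omega⟩ : Fin k) := Fin.ext h
    have h3 : skip2 m j = (⟨m + 1, hm⟩ : Fin k) :=
      ((hinv (skip2 m j)).symm.trans (congrArg p h2)).trans hM1
    exact ht.2 (congrArg Fin.val h3)
  · have h2 : p (skip2 m j) = (⟨m + 1, hm⟩ : Fin k) := Fin.ext h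
    have h4 : p (⟨m + 1, hm⟩ : Fin k) = (⟨m, by omega⟩ : Fin k) :=
      (congrArg p hM1.symm).trans (hinv _)
    have h3 : skip2 m j = (⟨m, by omega⟩ : Fin k) :=
      ((hinv (skip2 m j)).symm.trans (congrArg p h2)).trans h4
    exact ht.1 (congrArg Fin.val h3)

lemma skip2_delPair {k : ℕ} (p : Fin k → Fin k) (hinv : ∀ t, p (p t) = t)
    (m : ℕ) (hm : m + 1 < k) (hb : (p ⟨m, by omega⟩).val = m + 1) (j : Fin (k - 2)) :
    skip2 m (delPairFun p m j) = p (skip2 m j) := by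
  have hpt := pval_ne p hinv m hm hb j
  have hwk := (p (skip2 m j)).isLt
  have ht := skip2_ne (k := k) (m := m) j
  have hkm : m ≤ k - 2 := by omega
  apply Fin.ext
  rw [skip2_val]
  have hval : (delPairFun p m j).val =
      (if (p (skip2 m j)).val < m then (p (skip2 m j)).val
       else (p (skip2 m j)).val - 2) % (k - 2) := rfl
  rw [hval, Nat.mod_eq_of_lt (by split_ifs <;> omega)]
  split_ifs <;> omega

lemma skip2_succ {k m N : ℕ} (hk : 4 ≤ k) (hm : m + 1 < k) (i : Fin k → Fin N)
    (heq : i ⟨(m + 2) % k, Nat.mod_lt _ (by omega)⟩ = i ⟨m, by omega⟩) (j : Fin (k - 2)) :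
    i (skip2 m (cycSucc j)) = i (cycSucc (skip2 m j)) := by
  have hj := j.isLt
  have hIdx : ∀ (a b : Fin k), a.val = b.val → i a = i b := fun a b h => by
    cases a; cases b; simp only at h; subst h; rfl
  have hheq : ∀ (a b : Fin k), a.val = (m + 2) % k → b.val = m → i a = i b := by
    intro a b ha hb
    have h1 : a = (⟨(m + 2) % k, Nat.mod_lt _ (by omega)⟩ : Fin k) := Fin.ext ha
    have h2 : b = (⟨m, by omega⟩ : Fin k) := Fin.ext hb
    rw [h1, h2]; exact heq
  have hsv : ∀ (j' : Fin (k - 2)),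
      (cycSucc (skip2 m j')).val = ((skip2 (k := k) m j').val + 1) % k := fun _ => rfl
  have hcv : (cycSucc j).val = (j.val + 1) % (k - 2) := rfl
  by_cases h1 : j.val + 1 < k - 2
  · have hcv1 : (cycSucc j).val = j.val + 1 := by rw [hcv, Nat.mod_eq_of_lt h1]
    by_cases h2 : j.val + 1 < m
    · apply hIdx
      rw [skip2_val, hcv1, hsv, skip2_val]
      rw [if_pos h2, if_pos (by omega), Nat.mod_eq_of_lt (by omega)]
    · by_cases h3 : j.val < m
      · apply hheq
        · rw [skip2_val, hcv1, if_neg h2, Nat.mod_eq_of_lt (by omega)]; omega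
        · rw [hsv, skip2_val, if_pos h3, Nat.mod_eq_of_lt (by omega)]; omega
      · apply hIdx
        rw [skip2_val, hcv1, hsv, skip2_val]
        rw [if_neg h2, if_neg h3, Nat.mod_eq_of_lt (by omega)]
  · have hj1 : j.val = k - 3 := by omega
    have hcv0 : (cycSucc j).val = 0 := by
      rw [hcv, show j.val + 1 = k - 2 by omega, Nat.mod_self]
    by_cases h4 : 0 < m
    · by_cases h5 : j.val < m
      · apply hheq
        · rw [skip2_val, hcv0, if_pos h4]
          rw [show m + 2 = k by omega, Nat.mod_self]
        · rw [hsv, skip2_val, if_pos h5]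
          rw [Nat.mod_eq_of_lt (by omega)]; omega
      · apply hIdx
        rw [skip2_val, hcv0, if_pos h4, hsv, skip2_val, if_neg h5]
        rw [show j.val + 2 + 1 = k by omega, Nat.mod_self]
    · apply hheq
      · rw [skip2_val, hcv0, if_neg (by omega), Nat.mod_eq_of_lt (by omega)]; omega
      · rw [hsv, skip2_val, if_neg (by omega)]
        rw [show j.val + 2 + 1 = k by omega, Nat.mod_self]; omega

lemma mem_del {k N : ℕ} (hk : 4 ≤ k) (E : Fin N × Fin N → Fin N × Fin N → Prop)
    (p : Fin k → Fin k) (hinv : ∀ t, p (p t) = t) (m : ℕ) (hm : m + 1 < k)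
    (hb : (p ⟨m, by omega⟩).val = m + 1) (i : Fin k → Fin N)
    (hi : i ∈ PinvPair E p)
    (heq : i ⟨(m + 2) % k, Nat.mod_lt _ (by omega)⟩ = i ⟨m, by omega⟩) :
    (fun j => i (skip2 m j)) ∈ PinvPair E (delPairFun p m) := by
  intro l l'
  simp only
  rw [skip2_succ hk hm i heq l, skip2_succ hk hm i heq l']
  rw [hi (skip2 m l) (skip2 m l')]
  constructor
  · rintro (h | h)
    · exact Or.inl (skip2_inj (m := m) h)
    · refine Or.inr (skip2_inj (m := m) ?_)
      rw [skip2_delPair p hinv m hm hb l]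
      exact h
  · rintro (rfl | h)
    · exact Or.inl rfl
    · refine Or.inr ?_
      rw [← h, skip2_delPair p hinv m hm hb l]

lemma exists_skip2_a2 {k m : ℕ} (hk : 4 ≤ k) (hm : m + 1 < k) :
    ∃ j : Fin (k - 2), skip2 (k := k) m j = ⟨(m + 2) % k, Nat.mod_lt _ (by omega)⟩ := by
  by_cases hc : m + 2 < k
  · refine ⟨⟨m, by omega⟩, Fin.ext ?_⟩
    rw [skip2_val]
    show (if m < m then m else m + 2) = (m + 2) % k
    rw [if_neg (lt_irrefl m), Nat.mod_eq_of_lt hc]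
  · refine ⟨⟨0, by omega⟩, Fin.ext ?_⟩
    rw [skip2_val]
    show (if 0 < m then 0 else 0 + 2) = (m + 2) % k
    rw [if_pos (by omega), show m + 2 = k by omega, Nat.mod_self]

lemma exists_skip2_any {k m : ℕ} (hm : m + 1 < k) (t : Fin k)
    (h0 : t.val ≠ m) (h1 : t.val ≠ m + 1) : ∃ j, skip2 (k := k) m j = t := by
  have ht := t.isLt
  by_cases hc : t.val < m
  · refine ⟨⟨t.val, by omega⟩, Fin.ext ?_⟩
    rw [skip2_val]
    exact if_pos hc
  · refine ⟨⟨t.val - 2, by omega⟩, Fin.ext ?_⟩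
    rw [skip2_val, if_neg (by simp only; omega)]
    simp only
    omega

lemma count_triple {k N B : ℕ} (hk : 4 ≤ k) (hB : 1 ≤ B) (hN : 1 ≤ N)
    (E : Fin N × Fin N → Fin N × Fin N → Prop) (hC2 : cond2 E B)
    (p : Fin k → Fin k) (hinv : ∀ t, p (p t) = t) (hne : ∀ t, p t ≠ t)
    (M : Fin k) (hb : p M = cycAdd M 1) (x y z : Fin N) :
    ({i : Fin k → Fin N |
        (∀ l : Fin k, E (i l, i (cycSucc l)) (i (p l), i (cycSucc (p l)))) ∧
        i (cycAdd M 0) = x ∧ i (cycAdd M 1) = y ∧ i (cycAdd M 2) = z}).ncard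
      ≤ B ^ k * N ^ (k / 2 - 1) := by
  set σ : ℕ → ℕ := sigF p M with hσ
  set S : Set (Fin k → Fin N) := {i : Fin k → Fin N |
        (∀ l : Fin k, E (i l, i (cycSucc l)) (i (p l), i (cycSucc (p l)))) ∧
        i (cycAdd M 0) = x ∧ i (cycAdd M 1) = y ∧ i (cycAdd M 2) = z} with hS
  set b : ℕ → ℕ := fun r => if σ (r - 1) < r - 1 then B else N with hbdef
  -- step estimate
  have hstep : ∀ r, 3 ≤ r → r < k →
      (resF M (r + 1) '' S).ncard ≤ b r * (resF M r '' S).ncard := by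
    intro r h3 hrk
    have hTfin : (resF M (r + 1) '' S).Finite := Set.toFinite _
    have hRfin : (resF M r '' S).Finite := Set.toFinite _
    set f : (Fin (r + 1) → Fin N) → (Fin r → Fin N) := fun g j => g j.castSucc with hf
    have hresf : ∀ i : Fin k → Fin N, f (resF M (r + 1) i) = resF M r i := by
      intro i; funext j; simp [hf, resF]
    have himg : Finset.image f hTfin.toFinset ⊆ hRfin.toFinset := by
      intro a ha
      rw [Finset.mem_image] at ha
      obtain ⟨g, hg, rfl⟩ := ha
      rw [Set.Finite.mem_toFinset] at hg ⊢
      obtain ⟨i, hi, rfl⟩ := hg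
      exact ⟨i, hi, (hresf i).symm ▸ rfl⟩
    -- injectivity of last-coordinate map on fibers
    have hinjfib : ∀ a : Fin r → Fin N,
        Set.InjOn (fun g : Fin (r + 1) → Fin N => g (Fin.last r))
          (↑(hTfin.toFinset.filter fun g => f g = a) : Set (Fin (r + 1) → Fin N)) := by
      intro a g hg g' hg' hlast
      rw [Finset.coe_filter, Set.mem_setOf_eq] at hg hg'
      funext j
      rcases Fin.eq_castSucc_or_eq_last j with ⟨jj, rfl⟩ | rfl
      · have := congrFun (hg.2.trans hg'.2.symm) jj
        simpa [hf] using this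
      · exact hlast
    have hfib : ∀ a ∈ Finset.image f hTfin.toFinset,
        (hTfin.toFinset.filter fun g => f g = a).card ≤ b r := by
      intro a _
      by_cases hc : σ (r - 1) < r - 1
      · have hbr : b r = B := if_pos hc
        rw [hbr]
        set s' := σ (r - 1) with hs'
        have hs'r : s' < r - 1 := hc
        set V : Set (Fin N) :=
          {v | E (a ⟨s', by omega⟩, a ⟨s' + 1, by omega⟩) (a ⟨r - 1, by omega⟩, v)} with hV
        have hVfin : V.Finite := Set.toFinite _
        have hVB : hVfin.toFinset.card ≤ B := by
          rw [← Set.ncard_eq_toFinset_card _ hVfin]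
          exact hC2 _ _ _
        refine le_trans (Finset.card_le_card_of_injOn (fun g => g (Fin.last r)) ?_ (hinjfib a)) hVB
        intro g hg
        rw [Finset.mem_coe, Finset.mem_filter] at hg
        obtain ⟨hgT, hga⟩ := hg
        rw [Set.Finite.mem_toFinset] at hgT
        obtain ⟨i, hiS, rfl⟩ := hgT
        have hrel0 := hiS.1 (cycAdd M s')
        have hps' : p (cycAdd M s') = cycAdd M (r - 1) := by
          have h5 : σ s' = r - 1 := sigF_sigF p hinv M (by omega)
          rw [← h5]
          exact (cycAdd_sigF p M s').symm
        rw [hps', cycSucc_cycAdd, cycSucc_cycAdd, show r - 1 + 1 = r by omega] at hrel0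
        have hav : ∀ (s : ℕ) (hsr : s < r), a ⟨s, hsr⟩ = i (cycAdd M s) := by
          intro s hsr
          rw [← hga]
          simp [hf, resF]
        have hglast : resF M (r + 1) i (Fin.last r) = i (cycAdd M r) := rfl
        rw [Finset.mem_coe, Set.Finite.mem_toFinset]
        show E (a ⟨s', by omega⟩, a ⟨s' + 1, by omega⟩)
            (a ⟨r - 1, by omega⟩, resF M (r + 1) i (Fin.last r))
        rw [hav s' (by omega), hav (s' + 1) (by omega), hav (r - 1) (by omega), hglast]
        exact hrel0
      · have hbr : b r = N := if_neg hc
        rw [hbr]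
        have := Finset.card_le_card_of_injOn
          (fun g : Fin (r + 1) → Fin N => g (Fin.last r))
          (fun g _ => Finset.mem_univ (g (Fin.last r))) (hinjfib a)
        simpa using this
    have hkey := Finset.card_le_mul_card_image (f := f) hTfin.toFinset (b r) hfib
    rw [Set.ncard_eq_toFinset_card _ hTfin, Set.ncard_eq_toFinset_card _ hRfin]
    exact le_trans hkey (Nat.mul_le_mul_left _ (Finset.card_le_card himg))
  -- induction
  have hmain : ∀ r, 3 ≤ r → r ≤ k →
      (resF M r '' S).ncard ≤ ∏ j ∈ Finset.Ico 3 r, b j := by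
    intro r h3
    induction r, h3 using Nat.le_induction with
    | base =>
      intro _
      have hsub : resF M 3 '' S ⊆
          {fun j : Fin 3 => if j.val = 0 then x else if j.val = 1 then y else z} := by
        rintro _ ⟨i, hi, rfl⟩
        obtain ⟨_, hx, hy, hz⟩ := hi
        rw [Set.mem_singleton_iff]
        funext j
        fin_cases j
        · simpa [resF] using hx
        · simpa [resF] using hy
        · simpa [resF] using hz
      simp only [Finset.Ico_self, Finset.prod_empty]
      exact le_trans (Set.ncard_le_ncard hsub (Set.finite_singleton _))
        (le_of_eq (Set.ncard_singleton _))
    | succ r hr ih =>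
      intro hrk
      calc (resF M (r + 1) '' S).ncard ≤ b r * (resF M r '' S).ncard :=
            hstep r hr (by omega)
        _ ≤ b r * ∏ j ∈ Finset.Ico 3 r, b j :=
            Nat.mul_le_mul_left _ (ih (by omega))
        _ = ∏ j ∈ Finset.Ico 3 (r + 1), b j := by
            rw [Finset.prod_Ico_succ_top hr, mul_comm]
  -- S.ncard = (resF M k '' S).ncard
  have hres_inj : Set.InjOn (resF M k) S := by
    intro i _ i' _ h
    funext t
    have hlt : (t.val + (k - M.val)) % k < k := Nat.mod_lt _ (by omega)
    have h2 := congrFun h (⟨(t.val + (k - M.val)) % k, hlt⟩ : Fin k)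
    simpa [resF, cycAdd_recover] using h2
  -- product bound
  have hprod : ∏ j ∈ Finset.Ico 3 k, b j ≤ B ^ k * N ^ (k / 2 - 1) := by
    set A : Finset ℕ := (Finset.range k).filter (fun s => s < σ s) with hA
    have hAcard : A.card ≤ k / 2 := by
      have hAinj : Set.InjOn σ ↑A := by
        intro s hs t ht h
        rw [Finset.coe_filter, Set.mem_setOf_eq, Finset.mem_range] at hs ht
        have h1 := sigF_sigF p hinv M hs.1
        have h2 := sigF_sigF p hinv M ht.1
        rw [← h1, ← h2]
        exact congrArg σ h
      have himg2 : A.image σ ⊆ (Finset.range k).filter (fun s => σ s < s) := by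
        intro t ht
        rw [Finset.mem_image] at ht
        obtain ⟨s, hs, rfl⟩ := ht
        rw [Finset.mem_filter, Finset.mem_range] at hs ⊢
        refine ⟨sigF_lt p M s, ?_⟩
        rw [hσ, sigF_sigF p hinv M hs.1]
        exact hs.2
      have hdisj : Disjoint A (A.image σ) := by
        rw [Finset.disjoint_left]
        intro s hsA hsI
        have h1 := (Finset.mem_filter.1 hsA).2
        have h2 := (Finset.mem_filter.1 (himg2 hsI)).2
        omega
      have hcard2 : A.card + (A.image σ).card ≤ k := by
        rw [← Finset.card_union_of_disjoint hdisj]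
        calc (A ∪ A.image σ).card ≤ (Finset.range k).card := by
              apply Finset.card_le_card
              intro s hs
              rcases Finset.mem_union.1 hs with h | h
              · exact Finset.mem_range.2 (Finset.mem_range.1 (Finset.mem_filter.1 h).1)
              · exact (Finset.mem_filter.1 (himg2 h)).1
          _ = k := Finset.card_range k
      have himgcard : (A.image σ).card = A.card := Finset.card_image_of_injOn hAinj
      omega
    have h0A : 0 ∈ A := by
      have hσ0 : σ 0 = 1 := by
        rw [hσ]
        show ((p (cycAdd M 0)).val + (k - M.val)) % k = 1
        rw [cycAdd_zero, hb]
        exact cycAdd_val_recover M (by omega)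
      rw [Finset.mem_filter, Finset.mem_range, hσ0]
      exact ⟨by omega, by omega⟩
    set F : Finset ℕ := (Finset.Ico 3 k).filter (fun r => ¬ σ (r - 1) < r - 1) with hF
    have hFcard : F.card ≤ k / 2 - 1 := by
      have hFsub : F.image (· - 1) ⊆ A.erase 0 := by
        intro s hs
        rw [Finset.mem_image] at hs
        obtain ⟨r, hr, rfl⟩ := hs
        rw [Finset.mem_filter, Finset.mem_Ico] at hr
        obtain ⟨⟨h3r, hrk⟩, hnot⟩ := hr
        have hneq := sigF_ne p hne M (r - 1)
        rw [← hσ] at hneq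
        rw [Finset.mem_erase, Finset.mem_filter, Finset.mem_range]
        exact ⟨by omega, by omega, by omega⟩
      have hFinj : Set.InjOn (· - 1) ↑F := by
        intro s hs t ht h
        rw [Finset.coe_filter, Set.mem_setOf_eq, Finset.mem_Ico] at hs ht
        simp only at h
        omega
      calc F.card = (F.image (· - 1)).card := (Finset.card_image_of_injOn hFinj).symm
        _ ≤ (A.erase 0).card := Finset.card_le_card hFsub
        _ = A.card - 1 := Finset.card_erase_of_mem h0A
        _ ≤ k / 2 - 1 := by omega
    rw [← Finset.prod_filter_mul_prod_filter_not (Finset.Ico 3 k) (fun r => ¬ σ (r - 1) < r - 1) b]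
    have hpf1 : ∏ r ∈ F, b r = N ^ F.card := by
      rw [Finset.prod_congr rfl (fun r hr => ?_), Finset.prod_const]
      rw [hF, Finset.mem_filter] at hr
      exact if_neg hr.2
    have hpf2 : ∏ r ∈ (Finset.Ico 3 k).filter (fun r => ¬¬ σ (r - 1) < r - 1), b r
        = B ^ ((Finset.Ico 3 k).filter (fun r => ¬¬ σ (r - 1) < r - 1)).card := by
      rw [Finset.prod_congr rfl (fun r hr => ?_), Finset.prod_const]
      rw [Finset.mem_filter] at hr
      exact if_pos (not_not.1 hr.2)
    rw [hpf1, hpf2, mul_comm]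
    apply Nat.mul_le_mul
    · calc B ^ _ ≤ B ^ (Finset.Ico 3 k).card :=
            Nat.pow_le_pow_right hB (Finset.card_filter_le _ _)
        _ ≤ B ^ k := Nat.pow_le_pow_right hB (by rw [Nat.card_Ico]; omega)
    · exact Nat.pow_le_pow_right hN hFcard
  calc S.ncard = (resF M k '' S).ncard := (Set.ncard_image_of_injOn hres_inj).symm
    _ ≤ ∏ j ∈ Finset.Ico 3 k, b j := hmain k (by omega) le_rfl
    _ ≤ B ^ k * N ^ (k / 2 - 1) := hprod


end PinvLeafAux

set_option maxHeartbeats 2000000 in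
/-- If a pair-partition `π` of `{1,…,k}` (`k ≥ 4` even) contains a
block `{m, m+1}`, then `#P_N^{-1}(π) ≤ N · #P_N^{-1}(π̃) + o(N^{1+k/2})`, where
`π̃ = π ∖• {m, m+1}`. -/
theorem Pinv_card_leaf_removal (k : ℕ) (hk4 : 4 ≤ k) (hke : Even k)
    (E : (N : ℕ) → (Fin N × Fin N → Fin N × Fin N → Prop))
    (hE : ∀ N, Equivalence (E N))
    (hEsymm : ∀ N (p q : Fin N), E N (p, q) (q, p))
    (hC1 : (fun N => (cond1Count (E N) : ℝ)) =o[Filter.atTop] fun N => (N : ℝ) ^ 2)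
    (B : ℕ) (hB : 1 ≤ B) (hC2 : ∀ N, cond2 (E N) B)
    (hC3 : (fun N => (cond3Count (E N) : ℝ)) =o[Filter.atTop] fun N => (N : ℝ) ^ 2)
    (π : PairPartition k) (m : ℕ) (hm : m + 1 < k)
    (hb : (π.pair ⟨m, by omega⟩).val = m + 1) :
    ∃ err : ℕ → ℝ,
      err =o[Filter.atTop] (fun N => (N : ℝ) ^ (1 + k / 2)) ∧
      ∀ N : ℕ, ((PinvPair (E N) π.pair).ncard : ℝ) ≤
        N * ((PinvPair (E N) (delPairFun π.pair m)).ncard : ℝ) + err N := by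
  open PinvLeafAux in
  refine ⟨fun N => (cond3Count (E N) : ℝ) * (B : ℝ) ^ k * (N : ℝ) ^ (k / 2 - 1), ?_, ?_⟩
  · -- the error term is `o(N^{1+k/2})`
    have heq2 : (fun N : ℕ => (N : ℝ) ^ 2 * (N : ℝ) ^ (k / 2 - 1))
        = fun N : ℕ => (N : ℝ) ^ (1 + k / 2) := by
      funext N
      rw [← pow_add]
      congr 1
      omega
    have h1 : (fun N : ℕ => (cond3Count (E N) : ℝ) * (N : ℝ) ^ (k / 2 - 1))
        =o[Filter.atTop] fun N : ℕ => (N : ℝ) ^ (1 + k / 2) := by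
      have h0 := hC3.mul_isBigO
        (Asymptotics.isBigO_refl (fun N : ℕ => (N : ℝ) ^ (k / 2 - 1)) Filter.atTop)
      rwa [heq2] at h0
    have h2 := h1.const_mul_left ((B : ℝ) ^ k)
    have h3 : (fun N : ℕ => (cond3Count (E N) : ℝ) * (B : ℝ) ^ k * (N : ℝ) ^ (k / 2 - 1))
        = fun N : ℕ => (B : ℝ) ^ k * ((cond3Count (E N) : ℝ) * (N : ℝ) ^ (k / 2 - 1)) := by
      funext N; ring
    rw [h3]
    exact h2
  · intro N
    rcases Nat.eq_zero_or_pos N with hN0 | hN1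
    · subst hN0
      have hPempty : PinvPair (E 0) π.pair = ∅ :=
        Set.eq_empty_iff_forall_notMem.2 fun i _ => (i ⟨0, by omega⟩).elim0
      rw [hPempty]
      simp [Set.ncard_empty, zero_pow (show k / 2 - 1 ≠ 0 by omega)]
    · -- main case `N ≥ 1`
      set p := π.pair with hp
      have hinv := π.involutive
      have hne := π.pair_ne
      set a0 : Fin k := ⟨m, by omega⟩ with ha0
      set a1 : Fin k := ⟨m + 1, hm⟩ with ha1
      set a2 : Fin k := ⟨(m + 2) % k, Nat.mod_lt _ (by omega)⟩ with ha2
      have hsucc0 : cycSucc a0 = a1 := Fin.ext (Nat.mod_eq_of_lt hm)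
      have hsucc1 : cycSucc a1 = a2 := Fin.ext (by
        show (m + 1 + 1) % k = (m + 2) % k
        congr 1)
      have hpa0 : p a0 = a1 := Fin.ext hb
      set P := PinvPair (E N) p with hP
      set Q := PinvPair (E N) (delPairFun p m) with hQ
      set Aset : Set (Fin k → Fin N) := {i | i ∈ P ∧ i a2 = i a0} with hAset
      set Bset : Set (Fin k → Fin N) := {i | i ∈ P ∧ i a2 ≠ i a0} with hBset
      have hsplit : P ⊆ Aset ∪ Bset := by
        intro i hi
        by_cases h : i a2 = i a0
        · exact Or.inl ⟨hi, h⟩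
        · exact Or.inr ⟨hi, h⟩
      have hcard : P.ncard ≤ Aset.ncard + Bset.ncard :=
        le_trans (Set.ncard_le_ncard hsplit (Set.toFinite _)) (Set.ncard_union_le _ _)
      -- bound for Aset
      have hAbound : Aset.ncard ≤ N * Q.ncard := by
        set Φ : (Fin k → Fin N) → Fin N × (Fin (k - 2) → Fin N) :=
          fun i => (i a1, fun j => i (skip2 m j)) with hΦ
        have hsub : Φ '' Aset ⊆ (Set.univ ×ˢ Q) := by
          rintro _ ⟨i, ⟨hiP, hieq⟩, rfl⟩
          refine ⟨Set.mem_univ _, ?_⟩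
          exact mem_del hk4 (E N) p hinv m hm hb i hiP hieq
        have hinjA : Set.InjOn Φ Aset := by
          intro i hi i' hi' h
          have h1 : i a1 = i' a1 := congrArg Prod.fst h
          have h2 : (fun j => i (skip2 m j)) = fun j => i' (skip2 m j) :=
            congrArg Prod.snd h
          funext t
          have ht := t.isLt
          by_cases h0 : t.val = m
          · have hta : t = a0 := Fin.ext h0
            obtain ⟨j2, hj2⟩ := exists_skip2_a2 (m := m) hk4 hm
            have h3 := congrFun h2 j2
            rw [hj2] at h3
            rw [hta]
            calc i a0 = i a2 := hi.2.symm
              _ = i' a2 := h3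
              _ = i' a0 := hi'.2
          · by_cases h1t : t.val = m + 1
            · have hta : t = a1 := Fin.ext h1t
              rw [hta]; exact h1
            · obtain ⟨j, hj⟩ := exists_skip2_any hm t h0 h1t
              have h3 := congrFun h2 j
              rw [hj] at h3
              exact h3
        have hprodcard : (Set.univ ×ˢ Q : Set (Fin N × (Fin (k - 2) → Fin N))).ncard
            = N * Q.ncard := by
          have e : ↥(Set.univ ×ˢ Q : Set (Fin N × (Fin (k - 2) → Fin N)))
              ≃ Fin N × ↥Q :=
            (Equiv.Set.prod Set.univ Q).trans
              (Equiv.prodCongr (Equiv.Set.univ (Fin N)) (Equiv.refl _))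
          rw [← Nat.card_coe_set_eq, Nat.card_congr e, Nat.card_prod,
            Nat.card_eq_fintype_card, Fintype.card_fin, Nat.card_coe_set_eq]
        calc Aset.ncard = (Φ '' Aset).ncard := (Set.ncard_image_of_injOn hinjA).symm
          _ ≤ (Set.univ ×ˢ Q : Set (Fin N × (Fin (k - 2) → Fin N))).ncard :=
              Set.ncard_le_ncard hsub (Set.toFinite _)
          _ = N * Q.ncard := hprodcard
      -- bound for Bset
      have hBbound : Bset.ncard ≤ (B ^ k * N ^ (k / 2 - 1)) * cond3Count (E N) := by
        classical
        have hBfin : Bset.Finite := Set.toFinite _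
        set g : (Fin k → Fin N) → Fin N × Fin N × Fin N :=
          fun i => (i a0, i a1, i a2) with hg
        have hM1 : cycAdd a0 1 = a1 := Fin.ext (Nat.mod_eq_of_lt hm)
        have hM2 : cycAdd a0 2 = a2 := rfl
        have hfibB : ∀ t ∈ hBfin.toFinset.image g,
            (hBfin.toFinset.filter fun i => g i = t).card ≤ B ^ k * N ^ (k / 2 - 1) := by
          rintro ⟨x, y, z⟩ _
          set S0 : Set (Fin k → Fin N) := {i : Fin k → Fin N |
              (∀ l : Fin k, E N (i l, i (cycSucc l)) (i (p l), i (cycSucc (p l)))) ∧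
              i (cycAdd a0 0) = x ∧ i (cycAdd a0 1) = y ∧ i (cycAdd a0 2) = z} with hS0
          have hS0fin : S0.Finite := Set.toFinite _
          refine le_trans (Finset.card_le_card (t := hS0fin.toFinset) ?_) ?_
          · intro i hi2
            rw [Finset.mem_filter, Set.Finite.mem_toFinset] at hi2
            obtain ⟨⟨hiP, hine⟩, hgi⟩ := hi2
            rw [Set.Finite.mem_toFinset]
            have hx : i a0 = x := congrArg Prod.fst hgi
            have hy : i a1 = y := congrArg (fun t => t.2.1) hgi
            have hz : i a2 = z := congrArg (fun t => t.2.2) hgi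
            refine ⟨fun l => (hiP l (p l)).2 (Or.inr rfl), ?_, ?_, ?_⟩
            · rw [cycAdd_zero]; exact hx
            · rw [hM1]; exact hy
            · rw [hM2]; exact hz
          · rw [← Set.ncard_eq_toFinset_card _ hS0fin]
            exact count_triple hk4 hB hN1 (E N) (hC2 N) p hinv hne a0
              (hpa0.trans hM1.symm) x y z
        have hkeyB := Finset.card_le_mul_card_image (f := g) hBfin.toFinset
          (B ^ k * N ^ (k / 2 - 1)) hfibB
        have hT3fin : ({pqr : Fin N × Fin N × Fin N |
            E N (pqr.1, pqr.2.1) (pqr.2.1, pqr.2.2) ∧ pqr.2.2 ≠ pqr.1}).Finite :=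
          Set.toFinite _
        have himgB : hBfin.toFinset.image g ⊆ hT3fin.toFinset := by
          intro t ht
          rw [Finset.mem_image] at ht
          obtain ⟨i, hiB, rfl⟩ := ht
          rw [Set.Finite.mem_toFinset] at hiB
          obtain ⟨hiP, hine⟩ := hiB
          have hrel := (hiP a0 a1).2 (Or.inr hpa0)
          rw [hsucc0, hsucc1] at hrel
          rw [Set.Finite.mem_toFinset]
          exact ⟨hrel, hine⟩
        have himgcard : (hBfin.toFinset.image g).card ≤ cond3Count (E N) := by
          rw [cond3Count, Set.ncard_eq_toFinset_card _ hT3fin]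
          exact Finset.card_le_card himgB
        calc Bset.ncard = hBfin.toFinset.card := Set.ncard_eq_toFinset_card _ hBfin
          _ ≤ (B ^ k * N ^ (k / 2 - 1)) * (hBfin.toFinset.image g).card := hkeyB
          _ ≤ (B ^ k * N ^ (k / 2 - 1)) * cond3Count (E N) :=
              Nat.mul_le_mul_left _ himgcard
      have hkey : P.ncard ≤ N * Q.ncard + B ^ k * N ^ (k / 2 - 1) * cond3Count (E N) :=
        le_trans hcard (Nat.add_le_add hAbound hBbound)
      calc ((P.ncard : ℕ) : ℝ)
          ≤ ((N * Q.ncard + B ^ k * N ^ (k / 2 - 1) * cond3Count (E N) : ℕ) : ℝ) := by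
            exact_mod_cast hkey
        _ = N * (Q.ncard : ℝ)
            + (cond3Count (E N) : ℝ) * (B : ℝ) ^ k * (N : ℝ) ^ (k / 2 - 1) := by
            push_cast; ring
end
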